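/- Let y, x_1,...,x_p be mean-zero square-integrable random variables with E(x_j²) = 1 and y = Σ_j β_j x_j + ε, ε uncorrelated with each x_j. For nested selected sets Ĵ_0 = ∅ ⊂ Ĵ_1 ⊂ ... with Ĵ_{m} = Ĵ_{m−1} ∪ {ĵ_m}, suppose for each step m ≤ M the weak-greedy condition |μ_{Ĵ_{m−1}, ĵ_m}| ≥ ξ max_{1≤j≤p} |μ_{Ĵ_{m−1}, j}| holds (with μ_{J,j} the normalized unique contribution and μ_{J,j}=0 for j ∈ J). Then the semi-population residual satisfies E[(y(x) − y_{Ĵ_M}(x))²] ≤ (Σ_j |β_j|)² / (1 + M ξ²), where y(x) = Σ β_j x_j. -/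

import Mathlib

open MeasureTheory

section AuxGSFR
variable {Ω : Type*} [MeasurableSpace Ω] {μ : Measure Ω}

lemma aux_int_mul {f g : Ω → ℝ} (hf : MemLp f 2 μ) (hg : MemLp g 2 μ) :
    Integrable (fun ω => f ω * g ω) μ := by
  have hmaj : Integrable (fun ω => (f ω ^ 2 + g ω ^ 2) / 2) μ :=
    (hf.integrable_sq.add hg.integrable_sq).div_const 2
  refine hmaj.mono' (hf.1.mul hg.1) (Filter.Eventually.of_forall fun ω => ?_)
  have h1 : ‖f ω * g ω‖ = |f ω * g ω| := rfl
  rw [h1, abs_mul]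
  nlinarith [sq_nonneg (|f ω| - |g ω|), sq_abs (f ω), sq_abs (g ω), abs_nonneg (f ω), abs_nonneg (g ω)]

lemma aux_span {ι : Type*} (x : ι → Ω → ℝ) (T : Set ι) (hx : ∀ i, MemLp (x i) 2 μ)
    (r : Ω → ℝ) (hr : MemLp r 2 μ) (horth : ∀ i ∈ T, ∫ ω, r ω * x i ω ∂μ = 0) :
    ∀ f ∈ Submodule.span ℝ (x '' T), MemLp f 2 μ ∧ ∫ ω, r ω * f ω ∂μ = 0 := by
  intro f hf
  induction hf using Submodule.span_induction with
  | mem g hg =>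
    obtain ⟨i, hi, rfl⟩ := hg
    exact ⟨hx i, horth i hi⟩
  | zero => exact ⟨MemLp.zero, by simp⟩
  | add g h hg hh ihg ihh =>
    refine ⟨ihg.1.add ihh.1, ?_⟩
    have e : ∀ ω, r ω * (g + h) ω = r ω * g ω + r ω * h ω := fun ω => by
      simp [Pi.add_apply, mul_add]
    simp only [e]
    rw [integral_add (aux_int_mul hr ihg.1) (aux_int_mul hr ihh.1), ihg.2, ihh.2, add_zero]
  | smul c g hg ihg =>
    refine ⟨ihg.1.const_smul c, ?_⟩
    have e : ∀ ω, r ω * (c • g) ω = c * (r ω * g ω) := fun ω => by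
      simp [Pi.smul_apply, smul_eq_mul]; ring
    simp only [e]
    rw [integral_const_mul, ihg.2, mul_zero]

lemma aux_sq_expand {f g : Ω → ℝ} (hf : MemLp f 2 μ) (hg : MemLp g 2 μ) (c : ℝ) :
    ∫ ω, (f ω + c * g ω) ^ 2 ∂μ
      = ∫ ω, f ω ^ 2 ∂μ + (2 * c) * ∫ ω, f ω * g ω ∂μ + c ^ 2 * ∫ ω, g ω ^ 2 ∂μ := by
  have e : ∀ ω, (f ω + c * g ω) ^ 2
      = f ω ^ 2 + ((2 * c) * (f ω * g ω) + c ^ 2 * g ω ^ 2) := fun ω => by ring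
  simp only [e]
  have hi : Integrable (fun ω => (2 * c) * (f ω * g ω) + c ^ 2 * g ω ^ 2) μ :=
    ((aux_int_mul hf hg).const_mul (2 * c)).add (hg.integrable_sq.const_mul (c ^ 2))
  rw [integral_add hf.integrable_sq hi,
      integral_add ((aux_int_mul hf hg).const_mul (2 * c)) (hg.integrable_sq.const_mul (c ^ 2)),
      integral_const_mul, integral_const_mul]
  ring

lemma aux_rec (B ξ : ℝ) (hξ : 0 < ξ) (M : ℕ) (a : ℕ → ℝ)
    (ha0 : ∀ m, 0 ≤ a m) (haB : a 0 ≤ B ^ 2)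
    (hstep : ∀ m, m < M → a (m + 1) ≤ a m - ξ ^ 2 * a m ^ 2 / B ^ 2) :
    a M ≤ B ^ 2 / (1 + (M : ℝ) * ξ ^ 2) := by
  have hden : (0:ℝ) < 1 + (M:ℝ) * ξ ^ 2 := by positivity
  by_cases hM : a M ≤ 0
  · exact hM.trans (by positivity)
  push_neg at hM
  have hdec : ∀ m, m < M → a (m + 1) ≤ a m := by
    intro m hm
    have h := hstep m hm
    have h2 : 0 ≤ ξ ^ 2 * a m ^ 2 / B ^ 2 := by positivity
    linarith
  have hchain : ∀ m k, m + k ≤ M → a (m + k) ≤ a m := by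
    intro m k
    induction k with
    | zero => intro _; simp
    | succ k ih =>
      intro h
      have h1 : m + k < M := by omega
      have h2 := hdec (m + k) h1
      have h3 := ih (by omega)
      have h4 : m + (k + 1) = (m + k) + 1 := by omega
      rw [h4]; linarith
  have hpos : ∀ m, m ≤ M → 0 < a m := by
    intro m hm
    have h := hchain m (M - m) (by omega)
    rw [show m + (M - m) = M by omega] at h
    linarith
  have hB2 : (0:ℝ) < B ^ 2 := lt_of_lt_of_le (hpos 0 (Nat.zero_le _)) haB
  have hinv : ∀ m, m ≤ M → (1 + (m : ℝ) * ξ ^ 2) / B ^ 2 ≤ 1 / a m := by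
    intro m
    induction m with
    | zero =>
      intro _
      simp only [Nat.cast_zero, zero_mul, add_zero]
      exact one_div_le_one_div_of_le (hpos 0 (Nat.zero_le _)) haB
    | succ m ih =>
      intro hm1
      have hmM : m ≤ M := by omega
      have hmlt : m < M := by omega
      have hA : 0 < a m := hpos m hmM
      have hA' : 0 < a (m + 1) := hpos (m + 1) hm1
      have hst := hstep m hmlt
      set q : ℝ := ξ ^ 2 * a m / B ^ 2 with hq
      have hq0 : 0 < q := by positivity
      have heq : a m - ξ ^ 2 * a m ^ 2 / B ^ 2 = a m * (1 - q) := by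
        rw [hq]; field_simp
      have hst' : a (m + 1) ≤ a m * (1 - q) := heq ▸ hst
      have hq1 : 0 < 1 - q := by
        have h1 : 0 < a m * (1 - q) := lt_of_lt_of_le hA' hst'
        rcases mul_pos_iff.mp h1 with ⟨_, h⟩ | ⟨h, _⟩
        · exact h
        · linarith
      have key : 1 / a m + ξ ^ 2 / B ^ 2 ≤ 1 / a (m + 1) := by
        have h2 : 1 / (a m * (1 - q)) ≤ 1 / a (m + 1) :=
          one_div_le_one_div_of_le hA' hst'
        have h3 : (1 + q) / a m ≤ 1 / (a m * (1 - q)) := by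
          rw [div_le_div_iff₀ hA (mul_pos hA hq1)]
          nlinarith [sq_nonneg q, hA.le]
        have h4 : 1 / a m + ξ ^ 2 / B ^ 2 = (1 + q) / a m := by
          rw [hq, add_div]
          congr 1
          rw [div_div, mul_comm (B ^ 2) (a m), ← div_div, mul_div_assoc, mul_div_assoc,
            div_self hA.ne']
          ring
        linarith
      have ihm := ih hmM
      have hsplit : (1 + ((m:ℝ) + 1) * ξ ^ 2) / B ^ 2
          = (1 + (m:ℝ) * ξ ^ 2) / B ^ 2 + ξ ^ 2 / B ^ 2 := by ring
      push_cast
      rw [hsplit]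
      linarith
  have hM' := hinv M le_rfl
  rw [div_le_div_iff₀ hB2 (hpos M le_rfl)] at hM'
  rw [le_div_iff₀ hden]
  linarith

end AuxGSFR

/-- deterministic convergence bound for the (semi-population) GSFR /
projection weak greedy algorithm: if each selected variable achieves at least a
fraction `ξ` of the maximal normalized unique contribution at every step `m ≤ M`
along the nested path `Ĵ_0 = ∅ ⊂ Ĵ_1 ⊂ ⋯`, then the residual of the signal
`y(x) = Σ_j β_j x_j` after `M` steps satisfies
`E[(y(x) − y_{Ĵ_M}(x))²] ≤ (Σ_j |β_j|)² / (1 + M ξ²)`. -/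
theorem semi_population_gsfr_convergence_bound
    {Ω : Type*} [MeasurableSpace Ω] {μ : Measure Ω} [IsProbabilityMeasure μ]
    {p : ℕ} (hne : (Finset.univ : Finset (Fin p)).Nonempty)
    (x : Fin p → Ω → ℝ) (β : Fin p → ℝ) (ε y s : Ω → ℝ)
    (hxL2 : ∀ j, MemLp (x j) 2 μ)
    (hxmean : ∀ j, ∫ ω, x j ω ∂μ = 0)
    (hxvar : ∀ j, ∫ ω, (x j ω) ^ 2 ∂μ = 1)
    (hs : s = fun ω => ∑ j, β j * x j ω)
    (hy : y = fun ω => s ω + ε ω)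
    (hεuncorr : ∀ j, ∫ ω, ε ω * x j ω ∂μ = 0)
    (ξ : ℝ) (hξ0 : 0 < ξ) (hξ1 : ξ < 1)
    (M : ℕ) (Jset : ℕ → Finset (Fin p)) (jsel : ℕ → Fin p)
    (hJ0 : Jset 0 = ∅)
    (hJsucc : ∀ m < M, Jset (m + 1) = insert (jsel (m + 1)) (Jset m))
    (yproj : ℕ → Ω → ℝ) (xproj : ℕ → Fin p → Ω → ℝ)
    (hymem : ∀ m ≤ M, yproj m ∈ Submodule.span ℝ (x '' ((Jset m : Finset (Fin p)) : Set (Fin p))))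
    (hyorth : ∀ m ≤ M, ∀ j ∈ Jset m, ∫ ω, (s ω - yproj m ω) * x j ω ∂μ = 0)
    (hxpmem : ∀ m ≤ M, ∀ j, xproj m j ∈
      Submodule.span ℝ (x '' ((Jset m : Finset (Fin p)) : Set (Fin p))))
    (hxporth : ∀ m ≤ M, ∀ j, ∀ j' ∈ Jset m,
      ∫ ω, (x j ω - xproj m j ω) * x j' ω ∂μ = 0)
    (μc : ℕ → Fin p → ℝ)
    (hμc : ∀ m ≤ M, ∀ j, μc m j = if j ∈ Jset m then 0 else
      (∫ ω, (s ω - yproj m ω) * (x j ω - xproj m j ω) ∂μ)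
        / Real.sqrt (∫ ω, (x j ω - xproj m j ω) ^ 2 ∂μ))
    (hgreedy : ∀ m < M,
      ξ * (Finset.univ.sup' hne fun j => |μc m j|) ≤ |μc m (jsel (m + 1))|) :
    ∫ ω, (s ω - yproj M ω) ^ 2 ∂μ ≤ (∑ j, |β j|) ^ 2 / (1 + M * ξ ^ 2) := by
  clear hy hεuncorr hxmean hξ1
  set B := ∑ j, |β j| with hB
  -- basic membership / integrability facts
  have spanMem : ∀ (T : Finset (Fin p)), ∀ f ∈ Submodule.span ℝ (x '' (T : Set (Fin p))),
      MemLp f 2 μ :=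
    fun T f hf =>
      (aux_span x (T : Set (Fin p)) hxL2 (fun _ => (0:ℝ)) MemLp.zero (fun i _ => by simp) f hf).1
  have hsMem : MemLp s 2 μ := by
    rw [hs]; exact memLp_finset_sum _ (fun j _ => (hxL2 j).const_mul (β j))
  have hypM : ∀ m, m ≤ M → MemLp (yproj m) 2 μ := fun m hm => spanMem _ _ (hymem m hm)
  have hxpM : ∀ m, m ≤ M → ∀ j, MemLp (xproj m j) 2 μ := fun m hm j => spanMem _ _ (hxpmem m hm j)
  have hrM : ∀ m, m ≤ M → MemLp (fun ω => s ω - yproj m ω) 2 μ :=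
    fun m hm => hsMem.sub (hypM m hm)
  have huM : ∀ m, m ≤ M → ∀ j, MemLp (fun ω => x j ω - xproj m j ω) 2 μ :=
    fun m hm j => (hxL2 j).sub (hxpM m hm j)
  -- orthogonality of residuals to the whole span
  have horthy : ∀ m, m ≤ M → ∀ f ∈ Submodule.span ℝ (x '' ((Jset m : Finset (Fin p)) : Set (Fin p))),
      ∫ ω, (s ω - yproj m ω) * f ω ∂μ = 0 :=
    fun m hm f hf =>
      (aux_span x _ hxL2 _ (hrM m hm) (fun i hi => hyorth m hm i (Finset.mem_coe.mp hi)) f hf).2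
  have horthu : ∀ m, m ≤ M → ∀ j,
      ∀ f ∈ Submodule.span ℝ (x '' ((Jset m : Finset (Fin p)) : Set (Fin p))),
      ∫ ω, (x j ω - xproj m j ω) * f ω ∂μ = 0 :=
    fun m hm j f hf =>
      (aux_span x _ hxL2 _ (huM m hm j) (fun i hi => hxporth m hm j i (Finset.mem_coe.mp hi)) f hf).2
  have hann : ∀ m, (0:ℝ) ≤ ∫ ω, (s ω - yproj m ω) ^ 2 ∂μ :=
    fun m => integral_nonneg fun ω => sq_nonneg _
  -- best-approximation property of yproj
  have hbest : ∀ n, n ≤ M → ∀ z ∈ Submodule.span ℝ (x '' ((Jset n : Finset (Fin p)) : Set (Fin p))),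
      ∫ ω, (s ω - yproj n ω) ^ 2 ∂μ ≤ ∫ ω, (s ω - z ω) ^ 2 ∂μ := by
    intro n hn z hz
    have hzM : MemLp z 2 μ := spanMem _ _ hz
    have hwM : MemLp (fun ω => yproj n ω - z ω) 2 μ := (hypM n hn).sub hzM
    have hw_mem : yproj n - z ∈ Submodule.span ℝ (x '' ((Jset n : Finset (Fin p)) : Set (Fin p))) :=
      Submodule.sub_mem _ (hymem n hn) hz
    have hcross0 : ∫ ω, (s ω - yproj n ω) * (yproj n - z) ω ∂μ = 0 := horthy n hn _ hw_mem
    have hcross : ∫ ω, (s ω - yproj n ω) * (yproj n ω - z ω) ∂μ = 0 := by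
      simpa [Pi.sub_apply] using hcross0
    have hexp := aux_sq_expand (hrM n hn) hwM 1
    have hre : ∫ ω, (s ω - z ω) ^ 2 ∂μ
        = ∫ ω, ((s ω - yproj n ω) + 1 * (yproj n ω - z ω)) ^ 2 ∂μ := by
      congr 1; funext ω; ring
    have hsq : (0:ℝ) ≤ ∫ ω, (yproj n ω - z ω) ^ 2 ∂μ := integral_nonneg fun ω => sq_nonneg _
    rw [hre, hexp, hcross]
    nlinarith [hsq]
  -- the key one-step decrement
  have hstep : ∀ m, m < M → ∫ ω, (s ω - yproj (m + 1) ω) ^ 2 ∂μ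
      ≤ ∫ ω, (s ω - yproj m ω) ^ 2 ∂μ - μc m (jsel (m + 1)) ^ 2 := by
    intro m hm
    have hm' : m ≤ M := hm.le
    have hm1 : m + 1 ≤ M := hm
    have hspan : Submodule.span ℝ (x '' ((Jset m : Finset (Fin p)) : Set (Fin p)))
        ≤ Submodule.span ℝ (x '' ((Jset (m+1) : Finset (Fin p)) : Set (Fin p))) := by
      apply Submodule.span_mono
      apply Set.image_mono
      rw [hJsucc m hm]
      exact fun i hi => Finset.mem_coe.mpr (Finset.mem_insert_of_mem (Finset.mem_coe.mp hi))
    set j := jsel (m + 1) with hjdef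
    by_cases hj : j ∈ Jset m
    · have hμ0 : μc m j = 0 := by rw [hμc m hm' j, if_pos hj]
      rw [hμ0]
      have h := hbest (m+1) hm1 (yproj m) (hspan (hymem m hm'))
      simpa using h
    · set num := ∫ ω, (s ω - yproj m ω) * (x j ω - xproj m j ω) ∂μ with hnum
      set d := ∫ ω, (x j ω - xproj m j ω) ^ 2 ∂μ with hd
      have hd0 : (0:ℝ) ≤ d := integral_nonneg fun ω => sq_nonneg _
      have hμ : μc m j = num / Real.sqrt d := by rw [hμc m hm' j, if_neg hj]
      rcases eq_or_lt_of_le hd0 with h0 | h0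
      · have hμ0 : μc m j = 0 := by rw [hμ, ← h0, Real.sqrt_zero, div_zero]
        rw [hμ0]
        have h := hbest (m+1) hm1 (yproj m) (hspan (hymem m hm'))
        simpa using h
      · have hxjmem : x j ∈ Submodule.span ℝ (x '' ((Jset (m+1) : Finset (Fin p)) : Set (Fin p))) := by
          apply Submodule.subset_span
          exact Set.mem_image_of_mem x
            (by rw [hJsucc m hm]; exact Finset.mem_coe.mpr (Finset.mem_insert_self _ _))
        have humem : x j - xproj m j
            ∈ Submodule.span ℝ (x '' ((Jset (m+1) : Finset (Fin p)) : Set (Fin p))) :=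
          Submodule.sub_mem _ hxjmem (hspan (hxpmem m hm' j))
        set c := num / d with hc
        have hzmem : yproj m + c • (x j - xproj m j)
            ∈ Submodule.span ℝ (x '' ((Jset (m+1) : Finset (Fin p)) : Set (Fin p))) :=
          Submodule.add_mem _ (hspan (hymem m hm')) (Submodule.smul_mem _ c humem)
        have h1 := hbest (m+1) hm1 _ hzmem
        have hexp := aux_sq_expand (hrM m hm') (huM m hm' j) (-c)
        have hre : ∫ ω, (s ω - (yproj m + c • (x j - xproj m j)) ω) ^ 2 ∂μ
            = ∫ ω, ((s ω - yproj m ω) + (-c) * (x j ω - xproj m j ω)) ^ 2 ∂μ := by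
          congr 1; funext ω
          simp only [Pi.add_apply, Pi.smul_apply, Pi.sub_apply, smul_eq_mul]
          ring
        rw [hre, hexp] at h1
        have hμsq : μc m j ^ 2 = num ^ 2 / d := by
          rw [hμ, div_pow, Real.sq_sqrt hd0]
        rw [hμsq]
        have hval : (2 * (-c)) * num + (-c) ^ 2 * d = -(num ^ 2 / d) := by
          rw [hc]; field_simp; ring
        rw [← hnum] at h1
        linarith [h1, hval]
  -- d_j ≤ 1
  have hd1 : ∀ m, m ≤ M → ∀ j, ∫ ω, (x j ω - xproj m j ω) ^ 2 ∂μ ≤ 1 := by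
    intro m hm j
    have hu := huM m hm j
    have hxp := hxpM m hm j
    have hcross0 : ∫ ω, (x j ω - xproj m j ω) * xproj m j ω ∂μ = 0 :=
      horthu m hm j _ (hxpmem m hm j)
    have hexp := aux_sq_expand hu hxp 1
    have hre : ∫ ω, (x j ω) ^ 2 ∂μ
        = ∫ ω, ((x j ω - xproj m j ω) + 1 * xproj m j ω) ^ 2 ∂μ := by
      congr 1; funext ω; ring
    have h1 : (1:ℝ) = ∫ ω, (x j ω - xproj m j ω) ^ 2 ∂μ
        + (2 * 1) * ∫ ω, (x j ω - xproj m j ω) * xproj m j ω ∂μ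
        + 1 ^ 2 * ∫ ω, (xproj m j ω) ^ 2 ∂μ := by
      rw [← hexp, ← hre, hxvar j]
    rw [hcross0] at h1
    have h2 : (0:ℝ) ≤ ∫ ω, (xproj m j ω) ^ 2 ∂μ := integral_nonneg fun ω => sq_nonneg _
    linarith
  -- relation: cross moment equals μc times sqrt d
  have hru : ∀ m, m ≤ M → ∀ j, j ∉ Jset m →
      ∫ ω, (s ω - yproj m ω) * (x j ω - xproj m j ω) ∂μ
        = μc m j * Real.sqrt (∫ ω, (x j ω - xproj m j ω) ^ 2 ∂μ) := by
    intro m hm j hj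
    rw [hμc m hm j, if_neg hj]
    set num := ∫ ω, (s ω - yproj m ω) * (x j ω - xproj m j ω) ∂μ with hnum
    set d := ∫ ω, (x j ω - xproj m j ω) ^ 2 ∂μ with hd
    have hd0 : (0:ℝ) ≤ d := integral_nonneg fun ω => sq_nonneg _
    rcases eq_or_lt_of_le hd0 with h0 | h0
    · rw [← h0, Real.sqrt_zero, mul_zero]
      have hint : Integrable (fun ω => (x j ω - xproj m j ω) ^ 2) μ := (huM m hm j).integrable_sq
      have hu0 : (fun ω => x j ω - xproj m j ω) =ᵐ[μ] 0 := by
        have hae := (integral_eq_zero_iff_of_nonneg (fun ω => sq_nonneg (x j ω - xproj m j ω)) hint).mp h0.symm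
        filter_upwards [hae] with ω hω
        have hsq : (x j ω - xproj m j ω) ^ 2 = 0 := hω
        simpa using pow_eq_zero_iff (two_ne_zero) |>.mp hsq
      have hz : (fun ω => (s ω - yproj m ω) * (x j ω - xproj m j ω)) =ᵐ[μ] 0 := by
        filter_upwards [hu0] with ω hω
        simp only [Pi.zero_apply] at hω ⊢
        rw [hω, mul_zero]
      rw [hnum, integral_congr_ae hz]
      simp
    · rw [div_mul_cancel₀ _ (Real.sqrt_ne_zero'.mpr h0)]
  -- a m ≤ B * sup
  have hbound : ∀ m, m ≤ M → ∫ ω, (s ω - yproj m ω) ^ 2 ∂μ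
      ≤ B * (Finset.univ.sup' hne fun j => |μc m j|) := by
    intro m hm
    have hr := hrM m hm
    have hMx0 : (0:ℝ) ≤ Finset.univ.sup' hne fun j => |μc m j| :=
      le_trans (abs_nonneg (μc m hne.choose))
        (Finset.le_sup' (fun j => |μc m j|) (Finset.mem_univ hne.choose))
    have hcoord : ∀ j, |∫ ω, (s ω - yproj m ω) * x j ω ∂μ|
        ≤ Finset.univ.sup' hne fun j => |μc m j| := by
      intro j
      by_cases hj : j ∈ Jset m
      · rw [hyorth m hm j hj]; simpa using hMx0
      · have hsplit : ∫ ω, (s ω - yproj m ω) * x j ω ∂μ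
            = (∫ ω, (s ω - yproj m ω) * (x j ω - xproj m j ω) ∂μ)
              + ∫ ω, (s ω - yproj m ω) * xproj m j ω ∂μ := by
          rw [← integral_add (aux_int_mul hr (huM m hm j)) (aux_int_mul hr (hxpM m hm j))]
          congr 1; funext ω; ring
        have hxp0 : ∫ ω, (s ω - yproj m ω) * xproj m j ω ∂μ = 0 :=
          horthy m hm _ (hxpmem m hm j)
        rw [hsplit, hxp0, add_zero, hru m hm j hj, abs_mul]
        have hs1 : |Real.sqrt (∫ ω, (x j ω - xproj m j ω) ^ 2 ∂μ)| ≤ 1 := by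
          rw [abs_of_nonneg (Real.sqrt_nonneg _)]
          exact Real.sqrt_le_one.mpr (hd1 m hm j)
        calc |μc m j| * |Real.sqrt (∫ ω, (x j ω - xproj m j ω) ^ 2 ∂μ)|
            ≤ |μc m j| * 1 := mul_le_mul_of_nonneg_left hs1 (abs_nonneg _)
          _ = |μc m j| := mul_one _
          _ ≤ _ := Finset.le_sup' (fun j => |μc m j|) (Finset.mem_univ j)
    have ham : ∫ ω, (s ω - yproj m ω) ^ 2 ∂μ
        = ∑ j, β j * ∫ ω, (s ω - yproj m ω) * x j ω ∂μ := by
      have h1 : ∫ ω, (s ω - yproj m ω) ^ 2 ∂μ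
          = ∫ ω, (s ω - yproj m ω) * s ω ∂μ - ∫ ω, (s ω - yproj m ω) * yproj m ω ∂μ := by
        rw [← integral_sub (aux_int_mul hr hsMem) (aux_int_mul hr (hypM m hm))]
        congr 1; funext ω; ring
      rw [h1, horthy m hm (yproj m) (hymem m hm), sub_zero]
      have hsω : ∀ ω, s ω = ∑ k, β k * x k ω := fun ω => by rw [hs]
      have e : ∀ ω, ∑ j, β j * ((s ω - yproj m ω) * x j ω) = (s ω - yproj m ω) * s ω := by
        intro ω
        have h2 : ∑ j, β j * ((s ω - yproj m ω) * x j ω)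
            = (s ω - yproj m ω) * ∑ j, β j * x j ω := by
          rw [Finset.mul_sum]; exact Finset.sum_congr rfl fun k _ => by ring
        rw [h2, ← hsω]
      simp only [← e]
      rw [integral_finset_sum _ (fun k _ => ((aux_int_mul hr (hxL2 k)).const_mul (β k)))]
      exact Finset.sum_congr rfl fun k _ => integral_const_mul _ _
    rw [ham]
    calc ∑ j, β j * ∫ ω, (s ω - yproj m ω) * x j ω ∂μ
        ≤ ∑ j, |β j| * (Finset.univ.sup' hne fun j => |μc m j|) := by
          refine Finset.sum_le_sum fun j _ => ?_
          calc β j * ∫ ω, (s ω - yproj m ω) * x j ω ∂μ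
              ≤ |β j * ∫ ω, (s ω - yproj m ω) * x j ω ∂μ| := le_abs_self _
            _ = |β j| * |∫ ω, (s ω - yproj m ω) * x j ω ∂μ| := abs_mul _ _
            _ ≤ |β j| * (Finset.univ.sup' hne fun j => |μc m j|) :=
                mul_le_mul_of_nonneg_left (hcoord j) (abs_nonneg _)
      _ = B * (Finset.univ.sup' hne fun j => |μc m j|) := by rw [← Finset.sum_mul]
  -- cross moments bounded by 1
  have hcs : ∀ k j', |∫ ω, x k ω * x j' ω ∂μ| ≤ 1 := by
    intro k j'
    have hp := aux_sq_expand (hxL2 k) (hxL2 j') 1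
    have hm := aux_sq_expand (hxL2 k) (hxL2 j') (-1)
    have hp0 : (0:ℝ) ≤ ∫ ω, (x k ω + 1 * x j' ω) ^ 2 ∂μ := integral_nonneg fun ω => sq_nonneg _
    have hm0 : (0:ℝ) ≤ ∫ ω, (x k ω + (-1) * x j' ω) ^ 2 ∂μ := integral_nonneg fun ω => sq_nonneg _
    rw [hp, hxvar k, hxvar j'] at hp0
    rw [hm, hxvar k, hxvar j'] at hm0
    rw [abs_le]; constructor <;> nlinarith
  -- base bound
  have ha0B : ∫ ω, (s ω - yproj 0 ω) ^ 2 ∂μ ≤ B ^ 2 := by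
    have hy0 : yproj 0 = 0 := by
      have h := hymem 0 (Nat.zero_le M)
      rw [hJ0] at h
      simpa using h
    have hxp0 : ∀ j, xproj 0 j = 0 := fun j => by
      have h := hxpmem 0 (Nat.zero_le M) j
      rw [hJ0] at h
      simpa using h
    have hμ0 : ∀ j, μc 0 j = ∫ ω, s ω * x j ω ∂μ := by
      intro j
      rw [hμc 0 (Nat.zero_le M) j, if_neg (by simp [hJ0]), hy0, hxp0 j]
      simp only [Pi.zero_apply, sub_zero]
      rw [hxvar j, Real.sqrt_one, div_one]
    have hμB : ∀ j, |μc 0 j| ≤ B := by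
      intro j
      rw [hμ0 j]
      have hexp : ∫ ω, s ω * x j ω ∂μ = ∑ k, β k * ∫ ω, x k ω * x j ω ∂μ := by
        have e : ∀ ω, s ω * x j ω = ∑ k, β k * (x k ω * x j ω) := by
          intro ω
          calc s ω * x j ω = (∑ k, β k * x k ω) * x j ω := by conv_lhs => rw [hs]
            _ = ∑ k, β k * (x k ω * x j ω) := by
                rw [Finset.sum_mul]; exact Finset.sum_congr rfl fun k _ => by ring
        simp only [e]
        rw [integral_finset_sum _ (fun k _ => ((aux_int_mul (hxL2 k) (hxL2 j)).const_mul (β k)))]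
        exact Finset.sum_congr rfl fun k _ => integral_const_mul _ _
      rw [hexp]
      calc |∑ k, β k * ∫ ω, x k ω * x j ω ∂μ|
          ≤ ∑ k, |β k * ∫ ω, x k ω * x j ω ∂μ| := Finset.abs_sum_le_sum_abs _ _
        _ ≤ ∑ k, |β k| := by
            refine Finset.sum_le_sum fun k _ => ?_
            rw [abs_mul]
            calc |β k| * |∫ ω, x k ω * x j ω ∂μ|
                ≤ |β k| * 1 := mul_le_mul_of_nonneg_left (hcs k j) (abs_nonneg _)
              _ = |β k| := mul_one _
        _ = B := rfl
    have h1 := hbound 0 (Nat.zero_le M)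
    have h2 : (Finset.univ.sup' hne fun j => |μc 0 j|) ≤ B :=
      Finset.sup'_le _ _ fun j _ => hμB j
    have hB0 : (0:ℝ) ≤ B := Finset.sum_nonneg fun j _ => abs_nonneg _
    calc ∫ ω, (s ω - yproj 0 ω) ^ 2 ∂μ ≤ B * (Finset.univ.sup' hne fun j => |μc 0 j|) := h1
      _ ≤ B * B := mul_le_mul_of_nonneg_left h2 hB0
      _ = B ^ 2 := (pow_two B).symm
  -- combine: quadratic decrement
  have hB0 : (0:ℝ) ≤ B := Finset.sum_nonneg fun j _ => abs_nonneg _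
  have hstep2 : ∀ m, m < M → ∫ ω, (s ω - yproj (m + 1) ω) ^ 2 ∂μ
      ≤ ∫ ω, (s ω - yproj m ω) ^ 2 ∂μ
        - ξ ^ 2 * (∫ ω, (s ω - yproj m ω) ^ 2 ∂μ) ^ 2 / B ^ 2 := by
    intro m hm
    rcases eq_or_lt_of_le hB0 with hBz | hBpos
    · have h6 := hstep m hm
      have hz : ξ ^ 2 * (∫ ω, (s ω - yproj m ω) ^ 2 ∂μ) ^ 2 / B ^ 2 = 0 := by
        rw [← hBz]; norm_num
      rw [hz]
      have hsq := sq_nonneg (μc m (jsel (m + 1)))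
      linarith
    · have hb := hbound m hm.le
      have h1 : (∫ ω, (s ω - yproj m ω) ^ 2 ∂μ) / B ≤ Finset.univ.sup' hne fun j => |μc m j| := by
        rw [div_le_iff₀ hBpos]
        calc ∫ ω, (s ω - yproj m ω) ^ 2 ∂μ ≤ B * (Finset.univ.sup' hne fun j => |μc m j|) := hb
          _ = (Finset.univ.sup' hne fun j => |μc m j|) * B := mul_comm _ _
      have h2 : ξ * ((∫ ω, (s ω - yproj m ω) ^ 2 ∂μ) / B) ≤ |μc m (jsel (m + 1))| :=
        le_trans (mul_le_mul_of_nonneg_left h1 hξ0.le) (hgreedy m hm)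
      have h3 : (0:ℝ) ≤ ξ * ((∫ ω, (s ω - yproj m ω) ^ 2 ∂μ) / B) := by
        have := hann m
        positivity
      have h4 : (ξ * ((∫ ω, (s ω - yproj m ω) ^ 2 ∂μ) / B)) ^ 2 ≤ μc m (jsel (m + 1)) ^ 2 := by
        rw [← sq_abs (μc m (jsel (m + 1)))]
        exact pow_le_pow_left₀ h3 h2 2
      have h5 : (ξ * ((∫ ω, (s ω - yproj m ω) ^ 2 ∂μ) / B)) ^ 2
          = ξ ^ 2 * (∫ ω, (s ω - yproj m ω) ^ 2 ∂μ) ^ 2 / B ^ 2 := by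
        rw [mul_pow, div_pow]; ring
      have h6 := hstep m hm
      rw [h5] at h4
      linarith
  exact aux_rec B ξ hξ0 M (fun m => ∫ ω, (s ω - yproj m ω) ^ 2 ∂μ) hann ha0B hstep2
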